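/- Let Ω ⊂ ℝ³ be a bounded domain, d > 0, and Ω_d = {x ∈ Ω : dist(x, ∂Ω) > d}. Let φ : Ω̄_d → ℝ be Lipschitz continuous with Lipschitz constant 2M, let x₀ ∈ Ω̄_d attain the maximum of |φ| over Ω̄_d, and let w : Ω → ℝ≥0 be an integrable weight function. Assume: (i) s ∫_Ω |φ(x)| w(x) dx ≤ ε for some s > 0, ε ≥ 0; (ii) ∫_{B_r(x₀)} w(x) dx ≥ η > 0 for some 0 < r ≤ d. Then |φ(x₀)| ≤ ε/(sη) + 2Mr. -/
import Mathlib


open MeasureTheory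

/-- core pointwise estimate of the abstract interior stability theorem.
If `φ` is `2M`-Lipschitz on `Ω̄`, `x₀ ∈ Ω̄_d` maximises `|φ|` over `Ω̄_d`,
`w ≥ 0` is an integrable weight with `s∫_Ω |φ|w ≤ ε` and `∫_{B_r(x₀)} w ≥ η > 0`
for some `0 < r ≤ d`, then `|φ(x₀)| ≤ ε/(sη) + 2Mr`. -/
theorem stmt2 (Ω : Set (EuclideanSpace ℝ (Fin 3))) (hΩo : IsOpen Ω)
    (hΩb : Bornology.IsBounded Ω) (d : ℝ) (hd : 0 < d)
    (φ w : EuclideanSpace ℝ (Fin 3) → ℝ) (M s ε η r : ℝ)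
    (hM : 0 < M) (hs : 0 < s) (hε : 0 ≤ ε) (hη : 0 < η) (hr0 : 0 < r) (hrd : r ≤ d)
    (x₀ : EuclideanSpace ℝ (Fin 3))
    (hx₀ : x₀ ∈ closure {x ∈ Ω | d < Metric.infDist x (frontier Ω)})
    (hmax : ∀ x ∈ closure {x ∈ Ω | d < Metric.infDist x (frontier Ω)}, |φ x| ≤ |φ x₀|)
    (hLip : ∀ x ∈ closure Ω, ∀ y ∈ closure Ω, |φ x - φ y| ≤ 2 * M * dist x y)
    (hw : ∀ x, 0 ≤ w x) (hwint : IntegrableOn w Ω)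
    (hφmeas : Measurable φ) (hwmeas : Measurable w)
    (hφw : IntegrableOn (fun x => |φ x| * w x) Ω)
    (hupper : s * ∫ x in Ω, |φ x| * w x ≤ ε)
    (hlower : η ≤ ∫ x in Metric.ball x₀ r, w x) :
    |φ x₀| ≤ ε / (s * η) + 2 * M * r := by
  set F := frontier Ω with hF
  -- `infDist x₀ F ≥ d`
  have hDd : d ≤ Metric.infDist x₀ F := by
    have hcl : closure {x ∈ Ω | d < Metric.infDist x F} ⊆ {x | d ≤ Metric.infDist x F} :=
      closure_minimal (fun x hx => le_of_lt hx.2)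
        (isClosed_le continuous_const (Metric.continuous_infDist_pt F))
    exact hcl hx₀
  -- `x₀ ∈ closure Ω`
  have hx₀cl : x₀ ∈ closure Ω :=
    closure_mono (fun x hx => hx.1) hx₀
  -- `x₀ ∈ Ω`
  have hx₀Ω : x₀ ∈ Ω := by
    by_contra h
    have hfr : x₀ ∈ F := by
      rw [hF, frontier_eq_closure_inter_closure]
      exact ⟨hx₀cl, subset_closure h⟩
    have : Metric.infDist x₀ F = 0 := Metric.infDist_zero_of_mem hfr
    linarith
  -- nothing in the ball touches the frontier
  have hnofr : ∀ z ∈ Metric.ball x₀ r, z ∉ F := by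
    intro z hz hzF
    have h1 : Metric.infDist x₀ F ≤ dist x₀ z := Metric.infDist_le_dist_of_mem hzF
    have h2 : dist x₀ z < r := by rw [dist_comm]; exact hz
    linarith
  -- the ball is contained in Ω
  have hball : Metric.ball x₀ r ⊆ Ω := by
    have hsub : Metric.ball x₀ r ⊆ Ω ∪ (closure Ω)ᶜ := by
      intro z hz
      by_cases hc : z ∈ closure Ω
      · left
        by_contra h
        refine absurd ?_ (hnofr z hz)
        rw [hF, frontier_eq_closure_inter_closure]
        exact ⟨hc, subset_closure h⟩
      · right
        exact hc
    have hprec : IsPreconnected (Metric.ball x₀ r) :=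
      (convex_ball x₀ r).isPreconnected
    refine hprec.subset_left_of_subset_union hΩo isClosed_closure.isOpen_compl ?_ hsub
      ⟨x₀, Metric.mem_ball_self hr0, hx₀Ω⟩
    exact Set.disjoint_left.mpr fun z hz hz' => hz' (subset_closure hz)
  -- pointwise bound on the ball
  have hpt : ∀ z ∈ Metric.ball x₀ r, (|φ x₀| - 2 * M * r) * w z ≤ |φ z| * w z := by
    intro z hz
    have hzΩ : z ∈ closure Ω := subset_closure (hball hz)
    have hL := hLip x₀ hx₀cl z hzΩ
    have hdz : dist x₀ z < r := by rw [dist_comm]; exact hz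
    have h1 : |φ x₀| - |φ z| ≤ |φ x₀ - φ z| := abs_sub_abs_le_abs_sub _ _
    have h2 : 2 * M * dist x₀ z ≤ 2 * M * r := by nlinarith
    have h3 : |φ x₀| - 2 * M * r ≤ |φ z| := by linarith
    exact mul_le_mul_of_nonneg_right h3 (hw z)
  -- integrate over the ball
  have hwball : IntegrableOn w (Metric.ball x₀ r) := hwint.mono_set hball
  have hφwball : IntegrableOn (fun x => |φ x| * w x) (Metric.ball x₀ r) :=
    hφw.mono_set hball
  have hkey : (|φ x₀| - 2 * M * r) * ∫ x in Metric.ball x₀ r, w x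
      ≤ ∫ x in Metric.ball x₀ r, |φ x| * w x := by
    rw [← integral_const_mul]
    exact setIntegral_mono_on (hwball.const_mul _) hφwball measurableSet_ball hpt
  -- compare with the integral over Ω
  have hmono : ∫ x in Metric.ball x₀ r, |φ x| * w x ≤ ∫ x in Ω, |φ x| * w x := by
    refine setIntegral_mono_set hφw ?_ (HasSubset.Subset.eventuallyLE hball)
    exact Filter.Eventually.of_forall fun x => mul_nonneg (abs_nonneg _) (hw x)
  have hεs : ∫ x in Ω, |φ x| * w x ≤ ε / s := (le_div_iff₀' hs).mpr hupper
  set I := ∫ x in Metric.ball x₀ r, w x with hI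
  have hIη : η ≤ I := hlower
  by_cases hcase : |φ x₀| - 2 * M * r ≤ 0
  · have : 0 ≤ ε / (s * η) := div_nonneg hε (by positivity)
    linarith
  · push_neg at hcase
    have hA : (|φ x₀| - 2 * M * r) * η ≤ ε / s := by nlinarith
    have : |φ x₀| - 2 * M * r ≤ ε / (s * η) := by
      rw [le_div_iff₀ (by positivity)]
      have : ε / s * s = ε := div_mul_cancel₀ ε (ne_of_gt hs)
      nlinarith
    linarith
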